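/- Let Ω ⊆ ℝ^n be open, let a_1,…,a_r : Ω → ℝ be nonnegative continuous functions and w : Ω → ℝ^r continuous, and let ξ, ξ′ : Ω → ℝ^r be C² functions. For a C² function ζ : Ω → ℝ^r set F(ζ) := −Δζ + Σ_{j=1}^r a_j e^{⟨v_j,ζ⟩} v_j − w. Then at every point of Ω, −Δ log(Σ_{j=1}^r e^{⟨ξ−ξ′, u_j⟩}) ≤ ‖F(ξ)‖ + ‖F(ξ′)‖. (Euclidean-domain version of Theorem 1.3.) -/

import Mathlib

open scoped RealInnerProductSpace
open Real Filter

/-- The standard basis `u_1, …, u_r` of `ℝ^r`. -/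
noncomputable def stdU {r : ℕ} (j : Fin r) : EuclideanSpace ℝ (Fin r) :=
  EuclideanSpace.single j 1

/-- The vectors `v_j = u_{j+1} - u_j` (`j = 1, …, r-1`), `v_r = u_1 - u_r`. -/
noncomputable def stdV {r : ℕ} (j : Fin r) : EuclideanSpace ℝ (Fin r) :=
  stdU (⟨(j.val + 1) % r, Nat.mod_lt _ j.pos⟩ : Fin r) - stdU j

/-- The Euclidean Laplacian `Δf = Σ_i ∂²f/∂x_i²` (componentwise for vector-valued `f`). -/
noncomputable def lap {n : ℕ} {F : Type*} [NormedAddCommGroup F] [NormedSpace ℝ F]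
    (f : EuclideanSpace ℝ (Fin n) → F) (x : EuclideanSpace ℝ (Fin n)) : F :=
  ∑ i : Fin n, iteratedFDeriv ℝ 2 f x (fun _ => EuclideanSpace.single i 1)


variable {r : ℕ}

/-- sum of exponentials of coordinates -/
noncomputable def Sfun (r : ℕ) (z : EuclideanSpace ℝ (Fin r)) : ℝ :=
  ∑ j : Fin r, Real.exp (z j)

noncomputable def Gfun (r : ℕ) (z : EuclideanSpace ℝ (Fin r)) : ℝ := Real.log (Sfun r z)

noncomputable def Lmap (r : ℕ) (z : EuclideanSpace ℝ (Fin r)) :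
    EuclideanSpace ℝ (Fin r) →L[ℝ] ℝ :=
  ∑ j : Fin r, Real.exp (z j) • (EuclideanSpace.proj j : EuclideanSpace ℝ (Fin r) →L[ℝ] ℝ)

noncomputable def DGmap (r : ℕ) (z : EuclideanSpace ℝ (Fin r)) :
    EuclideanSpace ℝ (Fin r) →L[ℝ] ℝ :=
  (Sfun r z)⁻¹ • Lmap r z

noncomputable def L2map (r : ℕ) (z : EuclideanSpace ℝ (Fin r)) :
    EuclideanSpace ℝ (Fin r) →L[ℝ] (EuclideanSpace ℝ (Fin r) →L[ℝ] ℝ) :=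
  ∑ j : Fin r, (Real.exp (z j) •
      (EuclideanSpace.proj j : EuclideanSpace ℝ (Fin r) →L[ℝ] ℝ)).smulRight
    (EuclideanSpace.proj j : EuclideanSpace ℝ (Fin r) →L[ℝ] ℝ)

noncomputable def Mmap (r : ℕ) (z : EuclideanSpace ℝ (Fin r)) :
    EuclideanSpace ℝ (Fin r) →L[ℝ] (EuclideanSpace ℝ (Fin r) →L[ℝ] ℝ) :=
  (Sfun r z)⁻¹ • L2map r z + (-((Sfun r z ^ 2)⁻¹ • Lmap r z)).smulRight (Lmap r z)

lemma Spos (hr : 0 < r) (z : EuclideanSpace ℝ (Fin r)) : 0 < Sfun r z := by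
  have : Nonempty (Fin r) := ⟨⟨0, hr⟩⟩
  exact Finset.sum_pos (fun j _ => Real.exp_pos _) Finset.univ_nonempty

lemma hasFDerivAt_S (z : EuclideanSpace ℝ (Fin r)) : HasFDerivAt (Sfun r) (Lmap r z) z := by
  exact HasFDerivAt.fun_sum fun j _ =>
    ((EuclideanSpace.proj (𝕜 := ℝ) j).hasFDerivAt (x := z)).exp

lemma hasFDerivAt_G (hr : 0 < r) (z : EuclideanSpace ℝ (Fin r)) :
    HasFDerivAt (Gfun r) (DGmap r z) z :=
  (hasFDerivAt_S z).log (Spos hr z).ne'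

lemma hasFDerivAt_L (z : EuclideanSpace ℝ (Fin r)) : HasFDerivAt (Lmap r) (L2map r z) z := by
  have h : ∀ j : Fin r, HasFDerivAt
      (fun y : EuclideanSpace ℝ (Fin r) => Real.exp (y j) •
        (EuclideanSpace.proj j : EuclideanSpace ℝ (Fin r) →L[ℝ] ℝ))
      ((Real.exp (z j) •
        (EuclideanSpace.proj j : EuclideanSpace ℝ (Fin r) →L[ℝ] ℝ)).smulRight
        (EuclideanSpace.proj j)) z := by
    intro j
    have hc : HasFDerivAt (fun y : EuclideanSpace ℝ (Fin r) => Real.exp (y j))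
        (Real.exp (z j) • (EuclideanSpace.proj j : EuclideanSpace ℝ (Fin r) →L[ℝ] ℝ)) z :=
      ((EuclideanSpace.proj (𝕜 := ℝ) j).hasFDerivAt (x := z)).exp
    have := hc.smul (hasFDerivAt_const (EuclideanSpace.proj (𝕜 := ℝ) j) z)
    simp only [smul_zero, zero_add] at this
    exact this
  exact HasFDerivAt.fun_sum fun j _ => h j

lemma hasFDerivAt_DG (hr : 0 < r) (z : EuclideanSpace ℝ (Fin r)) :
    HasFDerivAt (DGmap r) (Mmap r z) z := by
  have hS := hasFDerivAt_S (r := r) z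
  have hinv : HasFDerivAt (fun y => (Sfun r y)⁻¹)
      (-((Sfun r z ^ 2)⁻¹ • Lmap r z)) z := by
    have := (hasDerivAt_inv (Spos hr z).ne').comp_hasFDerivAt z hS
    rw [neg_smul] at this
    exact this
  exact hinv.smul (hasFDerivAt_L z)

lemma Lmap_apply (z v : EuclideanSpace ℝ (Fin r)) :
    Lmap r z v = ∑ j : Fin r, Real.exp (z j) * v j := by
  simp [Lmap, ContinuousLinearMap.sum_apply]

lemma DGmap_apply (z v : EuclideanSpace ℝ (Fin r)) :
    DGmap r z v = (Sfun r z)⁻¹ * ∑ j : Fin r, Real.exp (z j) * v j := by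
  simp [DGmap, Lmap_apply]

lemma L2map_apply (z v : EuclideanSpace ℝ (Fin r)) :
    L2map r z v v = ∑ j : Fin r, Real.exp (z j) * v j ^ 2 := by
  simp [L2map, ContinuousLinearMap.sum_apply, smul_eq_mul]
  exact Finset.sum_congr rfl fun j _ => by ring

lemma Mmap_apply (z v : EuclideanSpace ℝ (Fin r)) :
    Mmap r z v v = (Sfun r z)⁻¹ * (∑ j : Fin r, Real.exp (z j) * v j ^ 2)
      - (Sfun r z ^ 2)⁻¹ * (∑ j : Fin r, Real.exp (z j) * v j) ^ 2 := by
  have h1 := L2map_apply z v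
  simp only [Mmap, ContinuousLinearMap.add_apply, ContinuousLinearMap.smul_apply,
    ContinuousLinearMap.smulRight_apply, ContinuousLinearMap.neg_apply, smul_eq_mul,
    h1, Lmap_apply]
  ring

lemma Mmap_nonneg (hr : 0 < r) (z v : EuclideanSpace ℝ (Fin r)) :
    0 ≤ Mmap r z v v := by
  rw [Mmap_apply]
  set S := Sfun r z with hS
  have hSpos := Spos hr z
  have hCS : (∑ j : Fin r, Real.exp (z j) * v j) ^ 2
      ≤ S * ∑ j : Fin r, Real.exp (z j) * v j ^ 2 := by
    have h := Finset.sum_mul_sq_le_sq_mul_sq Finset.univ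
      (fun j : Fin r => Real.exp (z j / 2)) (fun j : Fin r => Real.exp (z j / 2) * v j)
    have e1 : ∀ j : Fin r, Real.exp (z j / 2) * (Real.exp (z j / 2) * v j)
        = Real.exp (z j) * v j := by
      intro j; rw [← mul_assoc, ← Real.exp_add]; ring_nf
    have e2 : ∀ j : Fin r, Real.exp (z j / 2) ^ 2 = Real.exp (z j) := by
      intro j; rw [sq, ← Real.exp_add]; ring_nf
    have e3 : ∀ j : Fin r, (Real.exp (z j / 2) * v j) ^ 2 = Real.exp (z j) * v j ^ 2 := by
      intro j; rw [mul_pow, e2]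
    calc (∑ j : Fin r, Real.exp (z j) * v j) ^ 2
        = (∑ j : Fin r, Real.exp (z j / 2) * (Real.exp (z j / 2) * v j)) ^ 2 := by
          rw [Finset.sum_congr rfl fun j _ => (e1 j).symm]
      _ ≤ (∑ j : Fin r, Real.exp (z j / 2) ^ 2) * ∑ j : Fin r, (Real.exp (z j / 2) * v j) ^ 2 := h
      _ = S * ∑ j : Fin r, Real.exp (z j) * v j ^ 2 := by
          rw [Finset.sum_congr rfl fun j _ => e2 j, Finset.sum_congr rfl fun j _ => e3 j]
          rfl
  have h2 : (S ^ 2)⁻¹ * (∑ j : Fin r, Real.exp (z j) * v j) ^ 2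
      ≤ (S ^ 2)⁻¹ * (S * ∑ j : Fin r, Real.exp (z j) * v j ^ 2) :=
    mul_le_mul_of_nonneg_left hCS (by positivity)
  have h3 : (S ^ 2)⁻¹ * (S * ∑ j : Fin r, Real.exp (z j) * v j ^ 2)
      = S⁻¹ * ∑ j : Fin r, Real.exp (z j) * v j ^ 2 := by
    field_simp
  linarith [h2, h3.le]

variable {n : ℕ}

lemma iteratedFDeriv_two_comp_G (hr : 0 < r)
    {f : EuclideanSpace ℝ (Fin n) → EuclideanSpace ℝ (Fin r)}
    {x : EuclideanSpace ℝ (Fin n)} (hf : ContDiffAt ℝ 2 f x)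
    (e : EuclideanSpace ℝ (Fin n)) :
    iteratedFDeriv ℝ 2 (fun y => Gfun r (f y)) x (fun _ => e)
      = DGmap r (f x) (iteratedFDeriv ℝ 2 f x (fun _ => e))
        + Mmap r (f x) (fderiv ℝ f x e) (fderiv ℝ f x e) := by
  have hev : ∀ᶠ y in nhds x, ContDiffAt ℝ 2 f y := hf.eventually (by simp)
  have h1 : fderiv ℝ (fun y => Gfun r (f y)) =ᶠ[nhds x]
      fun y => (DGmap r (f y)).comp (fderiv ℝ f y) := by
    filter_upwards [hev] with y hy
    have hdf : HasFDerivAt f (fderiv ℝ f y) y :=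
      (hy.differentiableAt (by norm_num)).hasFDerivAt
    exact ((hasFDerivAt_G hr (f y)).comp y hdf).fderiv
  have hdfx : HasFDerivAt f (fderiv ℝ f x) x :=
    (hf.differentiableAt (by norm_num)).hasFDerivAt
  have hc : HasFDerivAt (fun y => DGmap r (f y))
      ((Mmap r (f x)).comp (fderiv ℝ f x)) x :=
    (hasFDerivAt_DG hr (f x)).comp x hdfx
  have hd : HasFDerivAt (fderiv ℝ f) (fderiv ℝ (fderiv ℝ f) x) x := by
    have : ContDiffAt ℝ 1 (fderiv ℝ f) x := hf.fderiv_right (by norm_num)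
    exact (this.differentiableAt (by norm_num)).hasFDerivAt
  have hcomp := hc.clm_comp hd
  have h2 : fderiv ℝ (fderiv ℝ (fun y => Gfun r (f y))) x
      = fderiv ℝ (fun y => (DGmap r (f y)).comp (fderiv ℝ f y)) x := h1.fderiv_eq
  rw [iteratedFDeriv_two_apply, iteratedFDeriv_two_apply, h2, hcomp.fderiv]
  simp [ContinuousLinearMap.add_apply, ContinuousLinearMap.comp_apply,
    ContinuousLinearMap.flip_apply]

lemma lap_comp_G (hr : 0 < r)
    {f : EuclideanSpace ℝ (Fin n) → EuclideanSpace ℝ (Fin r)}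
    {x : EuclideanSpace ℝ (Fin n)} (hf : ContDiffAt ℝ 2 f x) :
    ∃ Q : ℝ, 0 ≤ Q ∧
      lap (fun y => Gfun r (f y)) x = DGmap r (f x) (lap f x) + Q := by
  refine ⟨∑ i : Fin n, Mmap r (f x) (fderiv ℝ f x (EuclideanSpace.single i 1))
      (fderiv ℝ f x (EuclideanSpace.single i 1)),
    Finset.sum_nonneg fun i _ => Mmap_nonneg hr _ _, ?_⟩
  rw [lap, lap, map_sum, ← Finset.sum_add_distrib]
  exact Finset.sum_congr rfl fun i _ => iteratedFDeriv_two_comp_G hr hf _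

lemma lap_sub {f g : EuclideanSpace ℝ (Fin n) → EuclideanSpace ℝ (Fin r)}
    {x : EuclideanSpace ℝ (Fin n)} (hf : ContDiffAt ℝ 2 f x) (hg : ContDiffAt ℝ 2 g x) :
    lap (fun y => f y - g y) x = lap f x - lap g x := by
  have h1 : fderiv ℝ (fun y => f y - g y) =ᶠ[nhds x]
      fun y => fderiv ℝ f y - fderiv ℝ g y := by
    filter_upwards [hf.eventually (by simp), hg.eventually (by simp)] with y hfy hgy
    exact fderiv_sub (hfy.differentiableAt (by norm_num))
      (hgy.differentiableAt (by norm_num))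
  have hdf1 : ContDiffAt ℝ 1 (fderiv ℝ f) x := hf.fderiv_right (by norm_num)
  have hdg1 : ContDiffAt ℝ 1 (fderiv ℝ g) x := hg.fderiv_right (by norm_num)
  have hdf : DifferentiableAt ℝ (fderiv ℝ f) x := hdf1.differentiableAt (by norm_num)
  have hdg : DifferentiableAt ℝ (fderiv ℝ g) x := hdg1.differentiableAt (by norm_num)
  have h2 : fderiv ℝ (fderiv ℝ (fun y => f y - g y)) x
      = fderiv ℝ (fderiv ℝ f) x - fderiv ℝ (fderiv ℝ g) x := by
    rw [h1.fderiv_eq]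
    exact fderiv_sub hdf hdg
  rw [lap, lap, lap, ← Finset.sum_sub_distrib]
  refine Finset.sum_congr rfl fun i _ => ?_
  rw [iteratedFDeriv_two_apply, iteratedFDeriv_two_apply, iteratedFDeriv_two_apply, h2]
  simp

lemma sign_aux {t s α β : ℝ} (h : t - s = α - β) :
    0 ≤ (Real.exp t - Real.exp s) * (Real.exp α - Real.exp β) := by
  rcases le_total s t with hle | hle
  · have hba : β ≤ α := by linarith
    exact mul_nonneg (sub_nonneg.2 (Real.exp_le_exp.2 hle))
      (sub_nonneg.2 (Real.exp_le_exp.2 hba))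
  · have hab : α ≤ β := by linarith
    have h1 : Real.exp t - Real.exp s ≤ 0 := sub_nonpos.2 (Real.exp_le_exp.2 hle)
    have h2 : Real.exp α - Real.exp β ≤ 0 := sub_nonpos.2 (Real.exp_le_exp.2 hab)
    nlinarith


/-- Euclidean-domain version of Theorem 1.3: with
`F(ζ) = −Δζ + Σ_j a_j e^{⟨v_j,ζ⟩} v_j − w`, for any `C²` functions `ξ, ξ'` on `Ω`,
`−Δ log(Σ_j e^{⟨ξ−ξ',u_j⟩}) ≤ ‖F(ξ)‖ + ‖F(ξ')‖` on `Ω`. -/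
theorem distance_estimate (n r : ℕ) (hr : 2 ≤ r)
    (Ω : Set (EuclideanSpace ℝ (Fin n))) (hΩ : IsOpen Ω)
    (a : Fin r → EuclideanSpace ℝ (Fin n) → ℝ)
    (ha_cont : ∀ j, ContinuousOn (a j) Ω) (ha_nonneg : ∀ j, ∀ x ∈ Ω, 0 ≤ a j x)
    (w : EuclideanSpace ℝ (Fin n) → EuclideanSpace ℝ (Fin r)) (hw : ContinuousOn w Ω)
    (ξ ξ' : EuclideanSpace ℝ (Fin n) → EuclideanSpace ℝ (Fin r))
    (hξ : ContDiffOn ℝ 2 ξ Ω) (hξ' : ContDiffOn ℝ 2 ξ' Ω) :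
    ∀ x ∈ Ω,
      -lap (fun y => Real.log (∑ j : Fin r, Real.exp ⟪ξ y - ξ' y, stdU j⟫)) x
        ≤ ‖-lap ξ x + ∑ j : Fin r, (a j x * Real.exp ⟪stdV j, ξ x⟫) • stdV j - w x‖
          + ‖-lap ξ' x + ∑ j : Fin r, (a j x * Real.exp ⟪stdV j, ξ' x⟫) • stdV j - w x‖ := by
  intro x hx
  have hr0 : 0 < r := by omega
  have hξx : ContDiffAt ℝ 2 ξ x := hξ.contDiffAt (hΩ.mem_nhds hx)
  have hξ'x : ContDiffAt ℝ 2 ξ' x := hξ'.contDiffAt (hΩ.mem_nhds hx)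
  have hηx : ContDiffAt ℝ 2 (fun y => ξ y - ξ' y) x := hξx.sub hξ'x
  have hfun : (fun y => Real.log (∑ j : Fin r, Real.exp ⟪ξ y - ξ' y, stdU j⟫))
      = fun y => Gfun r (ξ y - ξ' y) := by
    funext y
    simp [Gfun, Sfun, stdU, EuclideanSpace.inner_single_right]
  rw [hfun]
  obtain ⟨Q, hQ, hlap0⟩ := lap_comp_G hr0 hηx
  set z : EuclideanSpace ℝ (Fin r) := ξ x - ξ' x with hz
  have hlap : lap (fun y => Gfun r (ξ y - ξ' y)) x
      = DGmap r z (lap (fun y => ξ y - ξ' y) x) + Q := hlap0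
  set S : ℝ := Sfun r z with hS
  have hSpos : 0 < S := Spos hr0 z
  set p : Fin r → ℝ := fun j => Real.exp (z j) / S with hp
  set q : EuclideanSpace ℝ (Fin r) := (WithLp.equiv 2 (Fin r → ℝ)).symm p with hq
  have hqj : ∀ j, q j = p j := fun j => rfl
  have hDGinner : ∀ v, DGmap r z v = ⟪q, v⟫ := by
    intro v
    rw [DGmap_apply, PiLp.inner_apply, Finset.mul_sum]
    refine Finset.sum_congr rfl fun j _ => ?_
    simp only [RCLike.inner_apply, conj_trivial, hqj, hp]
    ring
  set σ : Fin r → Fin r := fun j => (⟨(j.val + 1) % r, Nat.mod_lt _ j.pos⟩ : Fin r) with hσ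
  have hstdV : ∀ j : Fin r, stdV j = stdU (σ j) - stdU j := fun j => rfl
  have hqV : ∀ j : Fin r, ⟪q, stdV j⟫ = p (σ j) - p j := by
    intro j
    rw [hstdV, inner_sub_right, stdU, stdU, EuclideanSpace.inner_single_right,
      EuclideanSpace.inner_single_right]
    simp [hqj]
  have hVinner : ∀ (j : Fin r) (v : EuclideanSpace ℝ (Fin r)),
      ⟪stdV j, v⟫ = v (σ j) - v j := by
    intro j v
    rw [hstdV, inner_sub_left, stdU, stdU, EuclideanSpace.inner_single_left,
      EuclideanSpace.inner_single_left]
    simp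
  set c1 : Fin r → ℝ := fun j => a j x * Real.exp ⟪stdV j, ξ x⟫ with hc1
  set c2 : Fin r → ℝ := fun j => a j x * Real.exp ⟪stdV j, ξ' x⟫ with hc2
  set Fa : EuclideanSpace ℝ (Fin r) := -lap ξ x + ∑ j : Fin r, c1 j • stdV j - w x with hFa
  set Fb : EuclideanSpace ℝ (Fin r) := -lap ξ' x + ∑ j : Fin r, c2 j • stdV j - w x with hFb
  have hvec : lap ξ' x - lap ξ x = Fa - Fb - ∑ j : Fin r, (c1 j - c2 j) • stdV j := by
    simp only [hFa, hFb, sub_smul, Finset.sum_sub_distrib]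
    abel
  have hterm : ∀ j : Fin r, 0 ≤ (c1 j - c2 j) * ⟪q, stdV j⟫ := by
    intro j
    have hzk : ∀ k : Fin r, z k = ξ x k - ξ' x k := fun k => rfl
    have hdiff : ⟪stdV j, ξ x⟫ - ⟪stdV j, ξ' x⟫ = z (σ j) - z j := by
      rw [hVinner, hVinner, hzk, hzk]; ring
    have hsign := sign_aux hdiff
    have h1 : (c1 j - c2 j) * ⟪q, stdV j⟫
        = a j x * ((Real.exp ⟪stdV j, ξ x⟫ - Real.exp ⟪stdV j, ξ' x⟫)
            * (Real.exp (z (σ j)) - Real.exp (z j))) * S⁻¹ := by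
      rw [hqV, hc1, hc2, hp]
      simp only []
      rw [div_sub_div_same]
      ring
    rw [h1]
    exact mul_nonneg (mul_nonneg (ha_nonneg j x hx) hsign) (inv_nonneg.2 hSpos.le)
  have hp_nonneg : ∀ j, 0 ≤ p j := fun j => div_nonneg (Real.exp_pos _).le hSpos.le
  have hp_le : ∀ j, p j ≤ 1 := by
    intro j
    rw [hp]
    simp only []
    rw [div_le_one hSpos]
    exact Finset.single_le_sum (fun k _ => (Real.exp_pos (z k)).le) (Finset.mem_univ j)
  have hq1 : ‖q‖ ≤ 1 := by
    rw [EuclideanSpace.norm_eq]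
    rw [show (1 : ℝ) = Real.sqrt 1 from (Real.sqrt_one).symm]
    refine Real.sqrt_le_sqrt ?_
    have hsum : ∑ j : Fin r, p j = 1 := by
      rw [hp]
      simp only []
      rw [← Finset.sum_div]
      exact div_self hSpos.ne'
    calc ∑ j : Fin r, ‖q j‖ ^ 2 = ∑ j : Fin r, p j ^ 2 := by
          refine Finset.sum_congr rfl fun j _ => ?_
          rw [hqj, Real.norm_eq_abs, sq_abs]
      _ ≤ ∑ j : Fin r, p j := Finset.sum_le_sum fun j _ => by
          nlinarith [hp_nonneg j, hp_le j]
      _ = 1 := hsum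
  calc -lap (fun y => Gfun r (ξ y - ξ' y)) x
      = -(DGmap r z (lap (fun y => ξ y - ξ' y) x)) - Q := by rw [hlap]; ring
    _ ≤ -(DGmap r z (lap (fun y => ξ y - ξ' y) x)) := by linarith
    _ = ⟪q, lap ξ' x - lap ξ x⟫ := by
        rw [lap_sub hξx hξ'x, ← map_neg, neg_sub, hDGinner]
    _ = ⟪q, Fa⟫ - ⟪q, Fb⟫ - ∑ j : Fin r, (c1 j - c2 j) * ⟪q, stdV j⟫ := by
        rw [hvec, inner_sub_right (𝕜 := ℝ), inner_sub_right (𝕜 := ℝ), inner_sum]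
        congr 1
        exact Finset.sum_congr rfl fun j _ => real_inner_smul_right _ _ _
    _ ≤ ⟪q, Fa⟫ - ⟪q, Fb⟫ := by
        have := Finset.sum_nonneg fun j (_ : j ∈ Finset.univ) => hterm j
        linarith
    _ ≤ ‖Fa‖ + ‖Fb‖ := by
        have h1 := abs_real_inner_le_norm q Fa
        have h2 := abs_real_inner_le_norm q Fb
        rw [abs_le] at h1 h2
        have h3 : ‖q‖ * ‖Fa‖ ≤ ‖Fa‖ := mul_le_of_le_one_left (norm_nonneg _) hq1
        have h4 : ‖q‖ * ‖Fb‖ ≤ ‖Fb‖ := mul_le_of_le_one_left (norm_nonneg _) hq1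
        linarith [h1.1, h1.2, h2.1, h2.2]
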